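/- Let q be a prime power and m a positive integer dividing q + 1. Then the number of pairs (x, y) ∈ F_{q²} × F_{q²} satisfying y^q + y = x^m equals q·(m(q-1) + 1). -/

import Mathlib

open Finset Polynomial

/-- The number of roots in a field of `x ^ n = c * x` is at most `n`, for `n ≥ 2`. -/
private lemma aux_card_pow_eq_mul_le {K : Type*} [Field K] [Fintype K] [DecidableEq K]
    (n : ℕ) (hn : 2 ≤ n) (c : K) :
    (Finset.univ.filter fun x : K => x ^ n = c * x).card ≤ n := by
  set P : K[X] := X ^ n - C c * X with hPdef
  have hP : P ≠ 0 := by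
    intro h
    have h1 : P.coeff n = 0 := by rw [h]; simp
    rw [hPdef] at h1
    simp only [Polynomial.coeff_sub, Polynomial.coeff_X_pow_self, Polynomial.coeff_C_mul,
      Polynomial.coeff_X] at h1
    rw [if_neg (by omega : ¬ (1 : ℕ) = n)] at h1
    simp at h1
  have hsub : (Finset.univ.filter fun x : K => x ^ n = c * x) ⊆ P.roots.toFinset := by
    intro x hx
    rw [Finset.mem_filter] at hx
    rw [Multiset.mem_toFinset, Polynomial.mem_roots hP]
    simp [hPdef, Polynomial.IsRoot, sub_eq_zero, hx.2]
  calc (Finset.univ.filter fun x : K => x ^ n = c * x).card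
      ≤ P.roots.toFinset.card := Finset.card_le_card hsub
    _ ≤ Multiset.card P.roots := Multiset.toFinset_card_le _
    _ ≤ P.natDegree := Polynomial.card_roots' P
    _ ≤ n := by
        refine le_trans (Polynomial.natDegree_sub_le _ _) ?_
        simp only [Polynomial.natDegree_X_pow]
        have : (C c * X).natDegree ≤ 1 := by
          refine le_trans (Polynomial.natDegree_mul_le) ?_
          simp
        omega

/-- Fibers of an additive hom over points in the range have the same size as the kernel fiber. -/
private lemma aux_fiber_card {K : Type*} [Field K] [Fintype K] [DecidableEq K]
    (f : K →+ K) (c y0 : K) (h : f y0 = c) :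
    (Finset.univ.filter fun y => f y = c).card
      = (Finset.univ.filter fun y => f y = 0).card := by
  refine Finset.card_bij' (fun y _ => y - y0) (fun z _ => z + y0) ?_ ?_ ?_ ?_
  · intro a ha
    rw [Finset.mem_filter] at ha ⊢
    simp [map_sub, ha.2, h]
  · intro a ha
    rw [Finset.mem_filter] at ha ⊢
    simp [map_add, ha.2, h]
  · intro a _; ring
  · intro a _; ring

theorem stmt9 (q m : ℕ) (hq : IsPrimePow q) (hm : 0 < m) (hdvd : m ∣ q + 1)
    (K : Type*) [Field K] [Fintype K] [DecidableEq K]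
    (hK : Fintype.card K = q ^ 2) :
    (Finset.univ.filter (fun p : K × K => p.2 ^ q + p.2 = p.1 ^ m)).card
      = q * (m * (q - 1) + 1) := by
  classical
  have hq2 : 2 ≤ q := hq.two_le
  obtain ⟨p, k, hpp, hk, hpk⟩ := hq
  have hp : Nat.Prime p := Nat.prime_iff.mpr hpp
  -- characteristic of K is p
  have hcharP : CharP K p := by
    have hchar := ringChar.charP K
    obtain ⟨n, hp', hcard⟩ := FiniteField.card K (ringChar K)
    have hdvdp : p ∣ ringChar K := by
      have h1 : p ∣ Fintype.card K := by
        rw [hK, ← hpk]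
        exact dvd_pow (dvd_pow_self p hk.ne') (by positivity)
      rw [hcard] at h1
      exact hp.dvd_of_dvd_pow h1
    have : p = ringChar K := ((Nat.prime_dvd_prime_iff_eq hp hp').mp hdvdp)
    rw [this]; exact hchar
  haveI := hcharP
  haveI : Fact p.Prime := ⟨hp⟩
  have hadd : ∀ a b : K, (a + b) ^ q = a ^ q + b ^ q := by
    intro a b
    rw [← hpk]
    exact add_pow_char_pow a b p k
  -- the additive map f y = y^q + y
  let f : K →+ K := AddMonoidHom.mk' (fun y => y ^ q + y) (by
    intro a b
    simp only [hadd]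
    ring)
  have hf : ∀ y : K, f y = y ^ q + y := fun y => rfl
  -- S = fixed points of Frobenius
  set S : Finset K := Finset.univ.filter (fun c : K => c ^ q = c) with hSdef
  have hS_le : S.card ≤ q := by
    have := aux_card_pow_eq_mul_le q hq2 (1 : K)
    simpa [hSdef] using this
  set Kr : Finset K := Finset.univ.filter (fun y : K => f y = 0) with hKrdef
  have hKr_le : Kr.card ≤ q := by
    have h := aux_card_pow_eq_mul_le q hq2 (-1 : K)
    refine le_trans (le_of_eq ?_) h
    congr 1
    ext y
    simp only [Finset.mem_filter, Finset.mem_univ, true_and, hKrdef, hf]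
    constructor
    · intro h'; linear_combination h'
    · intro h'; linear_combination h'
  -- image of f lies in S
  have himg : Finset.univ.image f ⊆ S := by
    intro c hc
    rw [Finset.mem_image] at hc
    obtain ⟨y, _, rfl⟩ := hc
    rw [hSdef, Finset.mem_filter]
    refine ⟨Finset.mem_univ _, ?_⟩
    rw [hf, hadd]
    rw [← pow_mul, ← pow_two, ← hK, FiniteField.pow_card]
    ring
  -- card K = card image * card Kr
  have hcard_eq : q ^ 2 = (Finset.univ.image f).card * Kr.card := by
    rw [← hK, ← Finset.card_univ, Finset.card_eq_sum_card_image f Finset.univ]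
    rw [Finset.sum_congr rfl (fun c hc => ?_), Finset.sum_const, smul_eq_mul]
    rw [Finset.mem_image] at hc
    obtain ⟨y0, _, hy0⟩ := hc
    exact aux_fiber_card f c y0 hy0
  have himg_le : (Finset.univ.image f).card ≤ q := le_trans (Finset.card_le_card himg) hS_le
  have hq0 : 0 < q := by omega
  have hq2eq : q ^ 2 - 1 = (q + 1) * (q - 1) := by
    obtain ⟨r, hr⟩ : ∃ r, q = r + 1 := ⟨q - 1, by omega⟩
    subst hr
    have h1 : (r + 1) ^ 2 = (r ^ 2 + 2 * r) + 1 := by ring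
    rw [h1, Nat.add_sub_cancel, Nat.add_sub_cancel]
    ring
  have hmq : m * (q - 1) + m = m * q := by
    obtain ⟨r, hr⟩ : ∃ r, q = r + 1 := ⟨q - 1, by omega⟩
    subst hr
    rw [Nat.add_sub_cancel]
    ring
  have hKr_card : Kr.card = q := by nlinarith [hcard_eq, himg_le, hKr_le]
  have himg_card : (Finset.univ.image f).card = q := by nlinarith [hcard_eq, himg_le, hKr_le]
  have himg_eq : Finset.univ.image f = S :=
    Finset.eq_of_subset_of_card_le himg (by omega)
  -- fiber counts
  have hfiber : ∀ c : K, (Finset.univ.filter fun y => f y = c).card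
      = if c ∈ S then q else 0 := by
    intro c
    split_ifs with hc
    · rw [← himg_eq, Finset.mem_image] at hc
      obtain ⟨y0, _, hy0⟩ := hc
      rw [aux_fiber_card f c y0 hy0, ← hKrdef, hKr_card]
    · rw [Finset.card_eq_zero]
      rw [Finset.filter_eq_empty_iff]
      intro y _
      intro hy
      exact hc (himg_eq ▸ Finset.mem_image.mpr ⟨y, Finset.mem_univ y, hy⟩)
  -- main count
  have hmain : (Finset.univ.filter (fun p : K × K => p.2 ^ q + p.2 = p.1 ^ m)).card
      = q * (Finset.univ.filter (fun x : K => x ^ m ∈ S)).card := by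
    rw [Finset.card_filter, Fintype.sum_prod_type]
    have : ∀ x : K, (∑ y : K, if y ^ q + y = x ^ m then 1 else 0)
        = if x ^ m ∈ S then q else 0 := by
      intro x
      rw [← Finset.card_filter]
      have := hfiber (x ^ m)
      simp only [hf] at this
      exact this
    rw [Finset.sum_congr rfl (fun x _ => this x)]
    rw [Finset.sum_ite, Finset.sum_const, Finset.sum_const_zero, add_zero, smul_eq_mul,
      mul_comm]
  rw [hmain]
  have hd0 : 0 < m * (q - 1) := Nat.mul_pos hm (by omega)
  -- filter = insert 0 (nthRootsFinset d K)
  have hTset : (Finset.univ.filter (fun x : K => x ^ m ∈ S))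
      = insert (0 : K) (Polynomial.nthRootsFinset (m * (q - 1)) (1 : K)) := by
    ext x
    simp only [Finset.mem_filter, Finset.mem_univ, true_and, Finset.mem_insert,
      Polynomial.mem_nthRootsFinset hd0, hSdef]
    constructor
    · intro hx
      rcases eq_or_ne x 0 with rfl | hx0
      · exact Or.inl rfl
      · right
        have hx' : (x ^ m) ^ q = x ^ m := hx
        have h1 : x ^ (m * (q - 1)) * x ^ m = x ^ m := by
          rw [← pow_add, hmq, mul_comm m q, pow_mul]
          calc (x ^ q) ^ m = (x ^ m) ^ q := by rw [← pow_mul, ← pow_mul, mul_comm]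
            _ = x ^ m := hx'
        have hxm : x ^ m ≠ 0 := pow_ne_zero m hx0
        exact mul_right_cancel₀ hxm (by rw [h1, one_mul])
    · rintro (rfl | hx1)
      · rw [zero_pow hm.ne', zero_pow hq0.ne']
      · show (x ^ m) ^ q = x ^ m
        have h1 : (x ^ m) ^ q = x ^ (m * (q - 1)) * x ^ m := by
          rw [← pow_add, ← pow_mul]
          congr 1
          exact hmq.symm
        rw [h1, hx1, one_mul]
  rw [hTset]
  have h0notin : (0 : K) ∉ Polynomial.nthRootsFinset (m * (q - 1)) (1 : K) := by
    intro h
    rw [Polynomial.mem_nthRootsFinset hd0, zero_pow hd0.ne'] at h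
    exact zero_ne_one h
  rw [Finset.card_insert_of_notMem h0notin]
  -- count d-th roots of unity
  have hN : Fintype.card Kˣ = q ^ 2 - 1 := by rw [Fintype.card_units, hK]
  have hdN : m * (q - 1) ∣ q ^ 2 - 1 := by
    obtain ⟨t, ht⟩ := hdvd
    refine ⟨t, ?_⟩
    rw [hq2eq, ht]
    ring
  obtain ⟨g, hg⟩ := IsCyclic.exists_ofOrder_eq_natCard (α := Kˣ)
  rw [Nat.card_eq_fintype_card, hN] at hg
  have hN0 : 0 < q ^ 2 - 1 := by
    rw [hq2eq]
    exact Nat.mul_pos (by omega) (by omega)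
  have hζord : orderOf (g ^ ((q ^ 2 - 1) / (m * (q - 1)))) = m * (q - 1) := by
    rw [orderOf_pow, hg]
    have hgcd : Nat.gcd (q ^ 2 - 1) ((q ^ 2 - 1) / (m * (q - 1))) = (q ^ 2 - 1) / (m * (q - 1)) :=
      Nat.gcd_eq_right (Nat.div_dvd_of_dvd hdN)
    rw [hgcd, Nat.div_div_self hdN hN0.ne']
  have hprim : IsPrimitiveRoot ((g ^ ((q ^ 2 - 1) / (m * (q - 1))) : Kˣ) : K) (m * (q - 1)) := by
    rw [IsPrimitiveRoot.coe_units_iff]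
    have h := IsPrimitiveRoot.orderOf (g ^ ((q ^ 2 - 1) / (m * (q - 1))))
    rwa [hζord] at h
  rw [hprim.card_nthRootsFinset]
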